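/- Let M be a Gelfand–Tsetlin pattern of size 3 with δ(M)=m12+m22−m11−m23 and χ₊(M) the indicator of δ(M)>0. Define Ē(M) = C₁(M)·(m13−m33+1−C̄₁(M)) where C₁(M)=min{m11−m22,m12−m23} and C̄₁(M)=min{m23−m22,m12−m11}. Then Ē(M) = (m11−m22)(m13−m23−m33+m22+1) + (m13−m33−m12+m22+1)·δ(M)·χ₋(M), where χ₋(M) is the indicator of δ(M)<0. -/

import Mathlib

/-- For a Gelfand–Tsetlin pattern of size 3,
`Ē(M) = C₁(M)·(m13 - m33 + 1 - C̄₁(M))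
      = (m11 - m22)(m13 - m23 - m33 + m22 + 1) + (m13 - m33 - m12 + m22 + 1)·δ(M)·χ₋(M)`. -/
theorem stmt17 (m13 m23 m33 m12 m22 m11 : ℤ)
    (h1 : m13 ≥ m12) (h2 : m12 ≥ m23) (h3 : m23 ≥ m22) (h4 : m22 ≥ m33)
    (h5 : m12 ≥ m11) (h6 : m11 ≥ m22) :
    min (m11 - m22) (m12 - m23) *
        (m13 - m33 + 1 - min (m23 - m22) (m12 - m11)) =
      (m11 - m22) * (m13 - m23 - m33 + m22 + 1) +
        (m13 - m33 - m12 + m22 + 1) * (m12 + m22 - m11 - m23) *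
          (if m12 + m22 - m11 - m23 < 0 then 1 else 0) := by
  rcases lt_or_ge (m12 + m22 - m11 - m23) 0 with h | h
  · rw [if_pos h, min_eq_right (by omega : m12 - m23 ≤ m11 - m22),
      min_eq_right (by omega : m12 - m11 ≤ m23 - m22)]
    ring
  · rw [if_neg (by omega), min_eq_left (by omega : m11 - m22 ≤ m12 - m23),
      min_eq_left (by omega : m23 - m22 ≤ m12 - m11)]
    ring
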